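/- Every eigenvalue of L_λ(A₁,A₂,A₃)² is at least (smallest eigenvalue of (A₁-λ₁)² + (A₂-λ₂)² + (A₃-λ₃)²) minus (‖[A₁,A₂]‖ + ‖[A₂,A₃]‖ + ‖[A₃,A₁]‖). -/

import Mathlib

open Matrix
open scoped Kronecker Matrix.Norms.L2Operator

noncomputable section

def pauli1 : Matrix (Fin 2) (Fin 2) ℂ := !![0, 1; 1, 0]
def pauli2 : Matrix (Fin 2) (Fin 2) ℂ := !![0, -Complex.I; Complex.I, 0]
def pauli3 : Matrix (Fin 2) (Fin 2) ℂ := !![1, 0; 0, -1]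

def localizer {N : ℕ} (A₁ A₂ A₃ : Matrix (Fin N) (Fin N) ℂ) (lam : Fin 3 → ℝ) :
    Matrix (Fin 2 × Fin N) (Fin 2 × Fin N) ℂ :=
  pauli1 ⊗ₖ (A₁ - (lam 0 : ℂ) • 1) + pauli2 ⊗ₖ (A₂ - (lam 1 : ℂ) • 1)
    + pauli3 ⊗ₖ (A₃ - (lam 2 : ℂ) • 1)

lemma pauli_mul_table :
    pauli1 * pauli1 = 1 ∧ pauli2 * pauli2 = 1 ∧ pauli3 * pauli3 = 1 ∧
    pauli1 * pauli2 = Complex.I • pauli3 ∧ pauli2 * pauli1 = (-Complex.I) • pauli3 ∧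
    pauli2 * pauli3 = Complex.I • pauli1 ∧ pauli3 * pauli2 = (-Complex.I) • pauli1 ∧
    pauli3 * pauli1 = Complex.I • pauli2 ∧ pauli1 * pauli3 = (-Complex.I) • pauli2 := by
  refine ⟨?_,?_,?_,?_,?_,?_,?_,?_,?_⟩ <;>
    · ext i j
      fin_cases i <;> fin_cases j <;>
        simp [pauli1, pauli2, pauli3, Matrix.mul_apply, Fin.sum_univ_two, Complex.ext_iff]

set_option maxHeartbeats 1000000 in
lemma pauli_expand_sq {N : ℕ} (X₁ X₂ X₃ : Matrix (Fin N) (Fin N) ℂ) :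
    (pauli1 ⊗ₖ X₁ + pauli2 ⊗ₖ X₂ + pauli3 ⊗ₖ X₃) * (pauli1 ⊗ₖ X₁ + pauli2 ⊗ₖ X₂ + pauli3 ⊗ₖ X₃) =
      (1 : Matrix (Fin 2) (Fin 2) ℂ) ⊗ₖ (X₁ ^ 2 + X₂ ^ 2 + X₃ ^ 2)
      + pauli1 ⊗ₖ (Complex.I • (X₂ * X₃) + (-Complex.I) • (X₃ * X₂))
      + pauli2 ⊗ₖ (Complex.I • (X₃ * X₁) + (-Complex.I) • (X₁ * X₃))
      + pauli3 ⊗ₖ (Complex.I • (X₁ * X₂) + (-Complex.I) • (X₂ * X₁)) := by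
  obtain ⟨e11, e22, e33, e12, e21, e23, e32, e31, e13⟩ := pauli_mul_table
  simp only [add_mul, mul_add, ← mul_kronecker_mul, e11, e22, e33, e12, e21, e23,
    e32, e31, e13, sq, kronecker_add, kronecker_smul, smul_kronecker]
  module

lemma comm_shift {N : ℕ} (A B : Matrix (Fin N) (Fin N) ℂ) (a b : ℂ) :
    (A - a • 1) * (B - b • 1) - (B - b • 1) * (A - a • 1) = A * B - B * A := by
  simp only [sub_mul, mul_sub, smul_mul_assoc, mul_smul_comm, one_mul, mul_one]
  module

lemma kron_mulVec_norm_le {N : ℕ} (P : Matrix (Fin 2) (Fin 2) ℂ) (π : Equiv.Perm (Fin 2))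
    (cph : Fin 2 → ℂ) (hP : ∀ k l, P k l = if l = π k then cph k else 0)
    (hc : ∀ k, ‖cph k‖ ≤ 1) (D : Matrix (Fin N) (Fin N) ℂ) (x : Fin 2 × Fin N → ℂ) :
    ‖(EuclideanSpace.equiv (Fin 2 × Fin N) ℂ).symm ((P ⊗ₖ D) *ᵥ x)‖ ≤
      ‖D‖ * ‖(EuclideanSpace.equiv (Fin 2 × Fin N) ℂ).symm x‖ := by
  have happ : ∀ (f : Fin 2 × Fin N → ℂ) (i : Fin 2 × Fin N),
      ((EuclideanSpace.equiv (Fin 2 × Fin N) ℂ).symm f) i = f i := fun _ _ => rfl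
  have happ' : ∀ (f : Fin N → ℂ) (i : Fin N),
      ((EuclideanSpace.equiv (Fin N) ℂ).symm f) i = f i := fun _ _ => rfl
  have hrow : ∀ k n, ((P ⊗ₖ D) *ᵥ x) (k, n) = cph k * (D *ᵥ fun m => x (π k, m)) n := by
    intro k n
    simp only [mulVec, dotProduct, Fintype.sum_prod_type, kroneckerMap_apply, hP]
    rw [Finset.sum_eq_single (π k)]
    · simp [Finset.mul_sum, mul_assoc]
    · intro b _ hb; simp [hb]
    · simp
  have nne : (0:ℝ) ≤ ‖D‖ * ‖(EuclideanSpace.equiv (Fin 2 × Fin N) ℂ).symm x‖ :=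
    mul_nonneg (norm_nonneg _) (norm_nonneg _)
  rw [← Real.sqrt_sq nne, EuclideanSpace.norm_eq]
  apply Real.sqrt_le_sqrt
  have key : ∀ k : Fin 2, ∑ n : Fin N, ‖((P ⊗ₖ D) *ᵥ x) (k, n)‖ ^ 2 ≤
      ‖D‖^2 * ∑ n : Fin N, ‖x (π k, n)‖ ^ 2 := by
    intro k
    have h1 : ∑ n : Fin N, ‖((P ⊗ₖ D) *ᵥ x) (k, n)‖ ^ 2
        = ‖cph k‖^2 * ∑ n : Fin N, ‖(D *ᵥ fun m => x (π k, m)) n‖ ^ 2 := by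
      simp only [hrow, norm_mul, mul_pow, Finset.mul_sum]
    have esq : ∀ f : Fin N → ℂ,
        ‖(EuclideanSpace.equiv (Fin N) ℂ).symm f‖ ^ 2 = ∑ n : Fin N, ‖f n‖ ^ 2 := by
      intro f
      rw [EuclideanSpace.norm_eq, Real.sq_sqrt (by positivity)]
      simp only [happ']
    have h2 : ∑ n : Fin N, ‖(D *ᵥ fun m => x (π k, m)) n‖ ^ 2 ≤
        ‖D‖^2 * ∑ n : Fin N, ‖x (π k, n)‖ ^ 2 := by
      have hle := Matrix.l2_opNorm_mulVec D
        ((EuclideanSpace.equiv (Fin N) ℂ).symm (fun m => x (π k, m)))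
      have hsq := pow_le_pow_left₀ (norm_nonneg _) hle 2
      rw [esq, mul_pow, esq] at hsq
      exact hsq
    calc ∑ n : Fin N, ‖((P ⊗ₖ D) *ᵥ x) (k, n)‖ ^ 2
        = ‖cph k‖^2 * ∑ n : Fin N, ‖(D *ᵥ fun m => x (π k, m)) n‖ ^ 2 := h1
      _ ≤ 1 * (‖D‖^2 * ∑ n : Fin N, ‖x (π k, n)‖ ^ 2) := by
          apply mul_le_mul
          · simpa using pow_le_pow_left₀ (norm_nonneg _) (hc k) 2
          · exact h2
          · positivity
          · norm_num
      _ = ‖D‖^2 * ∑ n : Fin N, ‖x (π k, n)‖ ^ 2 := one_mul _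
  calc ∑ i : Fin 2 × Fin N, ‖((EuclideanSpace.equiv (Fin 2 × Fin N) ℂ).symm ((P ⊗ₖ D) *ᵥ x)) i‖ ^ 2
      = ∑ k : Fin 2, ∑ n : Fin N, ‖((P ⊗ₖ D) *ᵥ x) (k, n)‖ ^ 2 := by
        simp only [happ]; rw [Fintype.sum_prod_type]
    _ ≤ ∑ k : Fin 2, ‖D‖^2 * ∑ n : Fin N, ‖x (π k, n)‖ ^ 2 :=
        Finset.sum_le_sum fun k _ => key k
    _ = ‖D‖^2 * ∑ k : Fin 2, ∑ n : Fin N, ‖x (π k, n)‖ ^ 2 := by rw [← Finset.mul_sum]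
    _ = ‖D‖^2 * ∑ k : Fin 2, ∑ n : Fin N, ‖x (k, n)‖ ^ 2 := by
        rw [Equiv.sum_comp π (fun k => ∑ n : Fin N, ‖x (k, n)‖ ^ 2)]
    _ = (‖D‖ * ‖(EuclideanSpace.equiv (Fin 2 × Fin N) ℂ).symm x‖)^2 := by
        rw [mul_pow, EuclideanSpace.norm_eq]
        rw [Real.sq_sqrt (by positivity)]
        simp only [happ]
        rw [Fintype.sum_prod_type]

lemma star_dot_self {ι : Type*} [Fintype ι] (v : ι → ℂ) :
    star v ⬝ᵥ v = ((∑ i, ‖v i‖ ^ 2 : ℝ) : ℂ) := by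
  push_cast
  simp only [dotProduct, Pi.star_apply, Complex.star_def]
  refine Finset.sum_congr rfl fun i _ => ?_
  rw [mul_comm, Complex.mul_conj, ← Complex.ofReal_pow, Complex.normSq_eq_norm_sq]

lemma rayleigh_min {N : ℕ} {B : Matrix (Fin N) (Fin N) ℂ} (hB : B.IsHermitian)
    (μ : ℝ) (hμ : ∀ i, μ ≤ hB.eigenvalues i) (v : Fin N → ℂ) :
    μ * ∑ i, ‖v i‖ ^ 2 ≤ (star v ⬝ᵥ (B *ᵥ v)).re := by
  set U : Matrix (Fin N) (Fin N) ℂ :=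
    (Matrix.IsHermitian.eigenvectorUnitary hB : Matrix (Fin N) (Fin N) ℂ) with hUdef
  have hU : U * star U = 1 :=
    (Matrix.mem_unitaryGroup_iff).mp (Matrix.IsHermitian.eigenvectorUnitary hB).2
  set w : Fin N → ℂ := (star U) *ᵥ v with hwdef
  have hsw : star w = star v ᵥ* U := by
    rw [hwdef, star_mulVec, star_eq_conjTranspose, conjTranspose_conjTranspose]
  have compute1 : star v ⬝ᵥ (B *ᵥ v)
      = star w ⬝ᵥ ((diagonal (Complex.ofReal ∘ hB.eigenvalues)) *ᵥ w) := by
    conv_lhs => rw [hB.spectral_theorem, Unitary.conjStarAlgAut_apply]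
    rw [← mulVec_mulVec, ← mulVec_mulVec, dotProduct_mulVec, ← hsw]
    rfl
  have compute3 : ∑ i, ‖w i‖ ^ 2 = ∑ i, ‖v i‖ ^ 2 := by
    have : star w ⬝ᵥ w = star v ⬝ᵥ v := by
      rw [hsw, hwdef, ← dotProduct_mulVec, mulVec_mulVec, hU, one_mulVec]
    rw [star_dot_self, star_dot_self] at this
    exact_mod_cast this
  rw [compute1]
  have compute2 : (star w ⬝ᵥ ((diagonal (Complex.ofReal ∘ hB.eigenvalues)) *ᵥ w)).re
      = ∑ i, hB.eigenvalues i * ‖w i‖ ^ 2 := by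
    simp only [dotProduct, mulVec_diagonal, Function.comp_apply, Pi.star_apply, Complex.star_def]
    rw [Complex.re_sum]
    congr 1
    ext i
    have : (starRingEnd ℂ) (w i) * (↑(hB.eigenvalues i) * w i)
        = (hB.eigenvalues i : ℂ) * ((starRingEnd ℂ) (w i) * w i) := by ring
    rw [this, mul_comm ((starRingEnd ℂ) (w i)), Complex.mul_conj, ← Complex.ofReal_mul,
      Complex.ofReal_re, Complex.normSq_eq_norm_sq]
  rw [compute2, ← compute3, Finset.mul_sum]
  exact Finset.sum_le_sum fun i _ => mul_le_mul_of_nonneg_right (hμ i) (sq_nonneg _)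

lemma cauchy_schwarz_dot {ι : Type*} [Fintype ι] (u z : ι → ℂ) :
    ‖star u ⬝ᵥ z‖ ≤ ‖(EuclideanSpace.equiv ι ℂ).symm u‖ * ‖(EuclideanSpace.equiv ι ℂ).symm z‖ := by
  have h := norm_inner_le_norm (𝕜 := ℂ)
    ((EuclideanSpace.equiv ι ℂ).symm u) ((EuclideanSpace.equiv ι ℂ).symm z)
  rw [EuclideanSpace.inner_eq_star_dotProduct, dotProduct_comm] at h
  exact h

lemma eucl_norm_sq {ι : Type*} [Fintype ι] (f : ι → ℂ) :
    ‖(EuclideanSpace.equiv ι ℂ).symm f‖ ^ 2 = ∑ i, ‖f i‖ ^ 2 := by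
  rw [EuclideanSpace.norm_eq, Real.sq_sqrt (by positivity)]
  exact Finset.sum_congr rfl fun i _ => rfl

lemma one_kron_quadform {N : ℕ} (B : Matrix (Fin N) (Fin N) ℂ) (u : Fin 2 × Fin N → ℂ) :
    star u ⬝ᵥ (((1 : Matrix (Fin 2) (Fin 2) ℂ) ⊗ₖ B) *ᵥ u)
      = ∑ k : Fin 2, star (fun n => u (k, n)) ⬝ᵥ (B *ᵥ fun n => u (k, n)) := by
  have hrow : ∀ k n, (((1 : Matrix (Fin 2) (Fin 2) ℂ) ⊗ₖ B) *ᵥ u) (k, n)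
      = (B *ᵥ fun m => u (k, m)) n := by
    intro k n
    simp only [mulVec, dotProduct, Fintype.sum_prod_type, kroneckerMap_apply]
    rw [Finset.sum_eq_single k]
    · simp
    · intro b _ hb; simp [Matrix.one_apply_ne (Ne.symm hb)]
    · simp
  rw [dotProduct, Fintype.sum_prod_type]
  refine Finset.sum_congr rfl fun k _ => ?_
  rw [dotProduct]
  refine Finset.sum_congr rfl fun n _ => ?_
  rw [hrow]
  rfl

lemma pauli1_data : ∀ k l, pauli1 k l
    = if l = Equiv.swap (0 : Fin 2) 1 k then (![1, 1] : Fin 2 → ℂ) k else 0 := by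
  intro k l
  fin_cases k <;> fin_cases l <;> simp [pauli1, Equiv.swap_apply_def] <;> norm_num

lemma pauli2_data : ∀ k l, pauli2 k l
    = if l = Equiv.swap (0 : Fin 2) 1 k then (![-Complex.I, Complex.I] : Fin 2 → ℂ) k else 0 := by
  intro k l
  fin_cases k <;> fin_cases l <;> simp [pauli2, Equiv.swap_apply_def] <;> norm_num

lemma pauli3_data : ∀ k l, pauli3 k l
    = if l = Equiv.refl (Fin 2) k then (![1, -1] : Fin 2 → ℂ) k else 0 := by
  intro k l
  fin_cases k <;> fin_cases l <;> simp [pauli3] <;> norm_num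

/-- Every eigenvalue of `L_λ²` is bounded below by the smallest eigenvalue of
`(A₁-λ₁)² + (A₂-λ₂)² + (A₃-λ₃)²` minus the sum of the commutator norms. -/
theorem localizer_sq_eigenvalue_lower_bound {N : ℕ} (hN : 0 < N)
    (A₁ A₂ A₃ : Matrix (Fin N) (Fin N) ℂ)
    (hA₁ : A₁.IsHermitian) (hA₂ : A₂.IsHermitian) (hA₃ : A₃.IsHermitian)
    (lam : Fin 3 → ℝ) :
    ∀ (c : ℝ) (u : Fin 2 × Fin N → ℂ), u ≠ 0 →
      (localizer A₁ A₂ A₃ lam * localizer A₁ A₂ A₃ lam).mulVec u = (c : ℂ) • u →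
      sInf {c' : ℝ | ∃ v : Fin N → ℂ, v ≠ 0 ∧
          ((A₁ - (lam 0 : ℂ) • 1) ^ 2 + (A₂ - (lam 1 : ℂ) • 1) ^ 2
            + (A₃ - (lam 2 : ℂ) • 1) ^ 2).mulVec v = (c' : ℂ) • v}
        - (‖⁅A₁, A₂⁆‖ + ‖⁅A₂, A₃⁆‖ + ‖⁅A₃, A₁⁆‖) ≤ c := by
  intro c u hu hueq
  haveI : NeZero N := ⟨hN.ne'⟩
  set X₁ := A₁ - (lam 0 : ℂ) • 1 with hX₁
  set X₂ := A₂ - (lam 1 : ℂ) • 1 with hX₂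
  set X₃ := A₃ - (lam 2 : ℂ) • 1 with hX₃
  set B := X₁ ^ 2 + X₂ ^ 2 + X₃ ^ 2 with hBdef
  -- Hermitian facts
  have hsm : ∀ (r : ℝ), ((r : ℂ) • (1 : Matrix (Fin N) (Fin N) ℂ)).IsHermitian := by
    intro r
    show _ᴴ = _
    rw [conjTranspose_smul, conjTranspose_one, Complex.star_def, Complex.conj_ofReal]
  have hXh : ∀ (A : Matrix (Fin N) (Fin N) ℂ) (r : ℝ), A.IsHermitian →
      (A - (r : ℂ) • 1).IsHermitian := fun A r hA => hA.sub (hsm r)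
  have hB : B.IsHermitian :=
    (((hXh A₁ _ hA₁).pow 2).add ((hXh A₂ _ hA₂).pow 2)).add ((hXh A₃ _ hA₃).pow 2)
  -- the minimum eigenvalue
  obtain ⟨i₀, -, hμ₀⟩ := Finset.exists_mem_eq_inf' (Finset.univ_nonempty) hB.eigenvalues
  set μ : ℝ := Finset.univ.inf' Finset.univ_nonempty hB.eigenvalues with hμdef
  have hμle : ∀ i, μ ≤ hB.eigenvalues i := fun i => Finset.inf'_le _ (Finset.mem_univ i)
  -- μ is in the eigenvalue set
  have hμS : μ ∈ {c' : ℝ | ∃ v : Fin N → ℂ, v ≠ 0 ∧ B *ᵥ v = (c' : ℂ) • v} := by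
    refine ⟨⇑(hB.eigenvectorBasis i₀), ?_, ?_⟩
    · exact fun h0 => hB.eigenvectorBasis.orthonormal.ne_zero i₀ (by simpa using h0)
    · rw [hB.mulVec_eigenvectorBasis i₀, hμ₀]
      ext n
      simp [Complex.real_smul]
  -- positivity of the squared norm of a nonzero vector
  have hposfun : ∀ {ι : Type} [Fintype ι] (v : ι → ℂ), v ≠ 0 → 0 < ∑ i, ‖v i‖ ^ 2 := by
    intro ι _ v hv
    obtain ⟨i, hi⟩ := Function.ne_iff.mp hv
    exact Finset.sum_pos' (fun j _ => by positivity)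
      ⟨i, Finset.mem_univ i, by simpa using pow_pos (norm_pos_iff.mpr hi) 2⟩
  -- the eigenvalue set is bounded below
  have hbdd : BddBelow {c' : ℝ | ∃ v : Fin N → ℂ, v ≠ 0 ∧ B *ᵥ v = (c' : ℂ) • v} := by
    refine ⟨-‖B‖, fun c' hc' => ?_⟩
    obtain ⟨v, hv0, hveq⟩ := hc'
    have hpos := hposfun v hv0
    have heq : c' * (∑ i, ‖v i‖ ^ 2) = (star v ⬝ᵥ (B *ᵥ v)).re := by
      rw [hveq, dotProduct_smul, smul_eq_mul, star_dot_self, ← Complex.ofReal_mul,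
        Complex.ofReal_re]
    have hcs := cauchy_schwarz_dot v (B *ᵥ v)
    have hBv := Matrix.l2_opNorm_mulVec B ((EuclideanSpace.equiv (Fin N) ℂ).symm v)
    have hvnorm : ‖(EuclideanSpace.equiv (Fin N) ℂ).symm v‖ ^ 2 = ∑ i, ‖v i‖ ^ 2 :=
      eucl_norm_sq v
    have hlow : -(‖B‖ * ∑ i, ‖v i‖ ^ 2) ≤ (star v ⬝ᵥ (B *ᵥ v)).re := by
      have h1 : -(‖star v ⬝ᵥ (B *ᵥ v)‖) ≤ (star v ⬝ᵥ (B *ᵥ v)).re := by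
        exact (abs_le.mp (Complex.abs_re_le_norm _)).1
      refine le_trans ?_ h1
      rw [neg_le_neg_iff]
      calc ‖star v ⬝ᵥ (B *ᵥ v)‖
          ≤ ‖(EuclideanSpace.equiv (Fin N) ℂ).symm v‖
            * ‖(EuclideanSpace.equiv (Fin N) ℂ).symm (B *ᵥ v)‖ := hcs
        _ ≤ ‖(EuclideanSpace.equiv (Fin N) ℂ).symm v‖
            * (‖B‖ * ‖(EuclideanSpace.equiv (Fin N) ℂ).symm v‖) :=
            mul_le_mul_of_nonneg_left hBv (norm_nonneg _)
        _ = ‖B‖ * ‖(EuclideanSpace.equiv (Fin N) ℂ).symm v‖ ^ 2 := by ring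
        _ = ‖B‖ * ∑ i, ‖v i‖ ^ 2 := by rw [hvnorm]
    have : -‖B‖ * (∑ i, ‖v i‖ ^ 2) ≤ c' * (∑ i, ‖v i‖ ^ 2) := by
      rw [heq, neg_mul]; exact hlow
    exact le_of_mul_le_mul_right this hpos
  have hsinf : sInf {c' : ℝ | ∃ v : Fin N → ℂ, v ≠ 0 ∧ B *ᵥ v = (c' : ℂ) • v} ≤ μ :=
    csInf_le hbdd hμS
  -- the key quadratic-form estimate
  set nu : ℝ := ∑ i : Fin 2 × Fin N, ‖u i‖ ^ 2 with hnudef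
  have hnupos : 0 < nu := hposfun u hu
  have hnu : ‖(EuclideanSpace.equiv (Fin 2 × Fin N) ℂ).symm u‖ ^ 2 = nu := eucl_norm_sq u
  set D₁ := Complex.I • (X₂ * X₃) + (-Complex.I) • (X₃ * X₂) with hD₁def
  set D₂ := Complex.I • (X₃ * X₁) + (-Complex.I) • (X₁ * X₃) with hD₂def
  set D₃ := Complex.I • (X₁ * X₂) + (-Complex.I) • (X₂ * X₁) with hD₃def
  have hexp : localizer A₁ A₂ A₃ lam * localizer A₁ A₂ A₃ lam
      = (1 : Matrix (Fin 2) (Fin 2) ℂ) ⊗ₖ B + pauli1 ⊗ₖ D₁ + pauli2 ⊗ₖ D₂ + pauli3 ⊗ₖ D₃ :=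
    pauli_expand_sq X₁ X₂ X₃
  have hD₁ : D₁ = Complex.I • ⁅A₂, A₃⁆ := by
    rw [Ring.lie_def, ← comm_shift A₂ A₃ ((lam 1 : ℝ) : ℂ) ((lam 2 : ℝ) : ℂ), ← hX₂, ← hX₃,
      hD₁def]
    module
  have hD₂ : D₂ = Complex.I • ⁅A₃, A₁⁆ := by
    rw [Ring.lie_def, ← comm_shift A₃ A₁ ((lam 2 : ℝ) : ℂ) ((lam 0 : ℝ) : ℂ), ← hX₃, ← hX₁,
      hD₂def]
    module
  have hD₃ : D₃ = Complex.I • ⁅A₁, A₂⁆ := by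
    rw [Ring.lie_def, ← comm_shift A₁ A₂ ((lam 0 : ℝ) : ℂ) ((lam 1 : ℝ) : ℂ), ← hX₁, ← hX₂,
      hD₃def]
    module
  have hnD₁ : ‖D₁‖ = ‖⁅A₂, A₃⁆‖ := by rw [hD₁, norm_smul, Complex.norm_I, one_mul]
  have hnD₂ : ‖D₂‖ = ‖⁅A₃, A₁⁆‖ := by rw [hD₂, norm_smul, Complex.norm_I, one_mul]
  have hnD₃ : ‖D₃‖ = ‖⁅A₁, A₂⁆‖ := by rw [hD₃, norm_smul, Complex.norm_I, one_mul]
  -- bound for each cross term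
  have crossbound : ∀ (P : Matrix (Fin 2) (Fin 2) ℂ) (π : Equiv.Perm (Fin 2)) (cph : Fin 2 → ℂ),
      (∀ k l, P k l = if l = π k then cph k else 0) → (∀ k, ‖cph k‖ ≤ 1) →
      ∀ (D : Matrix (Fin N) (Fin N) ℂ),
      -(‖D‖ * nu) ≤ (star u ⬝ᵥ ((P ⊗ₖ D) *ᵥ u)).re := by
    intro P π cph hP hc D
    have h1 : -(‖star u ⬝ᵥ ((P ⊗ₖ D) *ᵥ u)‖) ≤ (star u ⬝ᵥ ((P ⊗ₖ D) *ᵥ u)).re := by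
      exact (abs_le.mp (Complex.abs_re_le_norm _)).1
    refine le_trans ?_ h1
    rw [neg_le_neg_iff]
    calc ‖star u ⬝ᵥ ((P ⊗ₖ D) *ᵥ u)‖
        ≤ ‖(EuclideanSpace.equiv (Fin 2 × Fin N) ℂ).symm u‖
          * ‖(EuclideanSpace.equiv (Fin 2 × Fin N) ℂ).symm ((P ⊗ₖ D) *ᵥ u)‖ :=
          cauchy_schwarz_dot u _
      _ ≤ ‖(EuclideanSpace.equiv (Fin 2 × Fin N) ℂ).symm u‖
          * (‖D‖ * ‖(EuclideanSpace.equiv (Fin 2 × Fin N) ℂ).symm u‖) :=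
          mul_le_mul_of_nonneg_left (kron_mulVec_norm_le P π cph hP hc D u) (norm_nonneg _)
      _ = ‖D‖ * ‖(EuclideanSpace.equiv (Fin 2 × Fin N) ℂ).symm u‖ ^ 2 := by ring
      _ = ‖D‖ * nu := by rw [hnu]
  have hc1 : ∀ k, ‖(![1, 1] : Fin 2 → ℂ) k‖ ≤ 1 := by
    intro k; fin_cases k <;> simp
  have hc2 : ∀ k, ‖(![-Complex.I, Complex.I] : Fin 2 → ℂ) k‖ ≤ 1 := by
    intro k; fin_cases k <;> simp [Complex.norm_I]
  have hc3 : ∀ k, ‖(![1, -1] : Fin 2 → ℂ) k‖ ≤ 1 := by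
    intro k; fin_cases k <;> simp
  -- the block-diagonal term
  have hblock : μ * nu ≤ (star u ⬝ᵥ (((1 : Matrix (Fin 2) (Fin 2) ℂ) ⊗ₖ B) *ᵥ u)).re := by
    rw [one_kron_quadform, Complex.re_sum]
    have : μ * nu = ∑ k : Fin 2, μ * ∑ n : Fin N, ‖u (k, n)‖ ^ 2 := by
      rw [← Finset.mul_sum, hnudef, Fintype.sum_prod_type]
    rw [this]
    exact Finset.sum_le_sum fun k _ => rayleigh_min hB μ hμle (fun n => u (k, n))
  -- put everything together
  have hmain : c * nu = (star u ⬝ᵥ ((localizer A₁ A₂ A₃ lam * localizer A₁ A₂ A₃ lam) *ᵥ u)).re := by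
    rw [hueq, dotProduct_smul, smul_eq_mul, star_dot_self, ← hnudef, ← Complex.ofReal_mul,
      Complex.ofReal_re]
  rw [hexp] at hmain
  have hsplit : (star u ⬝ᵥ (((1 : Matrix (Fin 2) (Fin 2) ℂ) ⊗ₖ B + pauli1 ⊗ₖ D₁ + pauli2 ⊗ₖ D₂
        + pauli3 ⊗ₖ D₃) *ᵥ u)).re
      = (star u ⬝ᵥ (((1 : Matrix (Fin 2) (Fin 2) ℂ) ⊗ₖ B) *ᵥ u)).re
        + (star u ⬝ᵥ ((pauli1 ⊗ₖ D₁) *ᵥ u)).re + (star u ⬝ᵥ ((pauli2 ⊗ₖ D₂) *ᵥ u)).re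
        + (star u ⬝ᵥ ((pauli3 ⊗ₖ D₃) *ᵥ u)).re := by
    simp only [add_mulVec, dotProduct_add, Complex.add_re]
  rw [hsplit] at hmain
  have hK1 := crossbound pauli1 (Equiv.swap 0 1) _ pauli1_data hc1 D₁
  have hK2 := crossbound pauli2 (Equiv.swap 0 1) _ pauli2_data hc2 D₂
  have hK3 := crossbound pauli3 (Equiv.refl _) _ pauli3_data hc3 D₃
  have hfinal : (μ - (‖⁅A₁, A₂⁆‖ + ‖⁅A₂, A₃⁆‖ + ‖⁅A₃, A₁⁆‖)) * nu ≤ c * nu := by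
    rw [hmain]
    have : (μ - (‖⁅A₁, A₂⁆‖ + ‖⁅A₂, A₃⁆‖ + ‖⁅A₃, A₁⁆‖)) * nu
        = μ * nu + (-(‖⁅A₂, A₃⁆‖ * nu) + -(‖⁅A₃, A₁⁆‖ * nu) + -(‖⁅A₁, A₂⁆‖ * nu)) := by ring
    rw [this]
    have h1 := hblock
    rw [hnD₁] at hK1
    rw [hnD₂] at hK2
    rw [hnD₃] at hK3
    linarith [hK1, hK2, hK3, h1]
  have hμc : μ - (‖⁅A₁, A₂⁆‖ + ‖⁅A₂, A₃⁆‖ + ‖⁅A₃, A₁⁆‖) ≤ c :=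
    le_of_mul_le_mul_right hfinal hnupos
  have := sub_le_sub_right hsinf (‖⁅A₁, A₂⁆‖ + ‖⁅A₂, A₃⁆‖ + ‖⁅A₃, A₁⁆‖)
  linarith
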